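/- Let F be a graph and suppose every 2-colouring of the edges of the complete graph on V(F) (extending a given colouring of E(F^k) with non-edges of F^k coloured red) yields either a blue path P_n or a balanced complete (k+1)-partite red subgraph on at least |V(F)| − kn vertices. If |V(F)| ≥ an/2 with a ≥ 6k, and F has the property that any k+1 pairwise disjoint vertex sets of size at least εan each (ε = 1/(3(k+1))) admit a path alternating cyclically through them, then every red/blue colouring of E(F^k) contains a blue copy of P_n or a red copy of P_n^k. -/

import Mathlib

open SimpleGraph Finset

/-- `H` has a copy (an injective graph homomorphism image) in `G`. -/
def Copy {V W : Type*} (H : SimpleGraph W) (G : SimpleGraph V) : Prop :=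
  ∃ f : H →g G, Function.Injective f

/-- `G → H`: every red/blue colouring of the edges of `G` (red edges given by a
subgraph `R ≤ G`, blue edges by `G \ R`) contains a monochromatic copy of `H`. -/
def Arrow {V W : Type*} (G : SimpleGraph V) (H : SimpleGraph W) : Prop :=
  ∀ R : SimpleGraph V, R ≤ G → Copy H R ∨ Copy H (G \ R)

/-- The size-Ramsey number `r̂(H)`. -/
noncomputable def sizeRamsey {W : Type*} (H : SimpleGraph W) : ℕ :=
  sInf {m | ∃ (N : ℕ) (G : SimpleGraph (Fin N)), Arrow G H ∧ G.edgeSet.ncard = m}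

/-- The (2-colour) Ramsey number `r(H)`. -/
noncomputable def ramseyNum {W : Type*} (H : SimpleGraph W) : ℕ :=
  sInf {N | Arrow (⊤ : SimpleGraph (Fin N)) H}

/-- The `k`-th power `H^k` of a graph: edges between distinct vertices at distance at most `k`. -/
def gpow {V : Type*} (H : SimpleGraph V) (k : ℕ) : SimpleGraph V where
  Adj u v := u ≠ v ∧ ∃ p : H.Walk u v, p.length ≤ k
  symm := ⟨by rintro u v ⟨h, p, hp⟩; exact ⟨h.symm, p.reverse, by simpa using hp⟩⟩
  loopless := ⟨by rintro u ⟨h, -⟩; exact h rfl⟩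

/-- The complete blow-up of `H` where each vertex is replaced by a clique of size `m`. -/
def blowup {V : Type*} (H : SimpleGraph V) (m : ℕ) : SimpleGraph (V × Fin m) where
  Adj x y := (x.1 = y.1 ∧ x.2 ≠ y.2) ∨ H.Adj x.1 y.1
  symm := ⟨by rintro x y (⟨h1, h2⟩ | h); exacts [Or.inl ⟨h1.symm, h2.symm⟩, Or.inr h.symm]⟩
  loopless := ⟨by rintro x (⟨-, h⟩ | h); exacts [h rfl, H.irrefl h]⟩

/-- `P_n^k`, the `k`-th power of the path on `n` vertices. -/
def pathPow (n k : ℕ) : SimpleGraph (Fin n) where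
  Adj i j := i ≠ j ∧ i.val - j.val ≤ k ∧ j.val - i.val ≤ k
  symm := ⟨by rintro i j ⟨h, h1, h2⟩; exact ⟨h.symm, h2, h1⟩⟩
  loopless := ⟨by rintro i ⟨h, -⟩; exact h rfl⟩

/-- `C_n^k`, the `k`-th power of the cycle on `n` vertices. -/
def cyclePow (n k : ℕ) : SimpleGraph (ZMod n) where
  Adj i j := i ≠ j ∧ ∃ d : ℕ, 1 ≤ d ∧ d ≤ k ∧ (i = j + (d : ZMod n) ∨ j = i + (d : ZMod n))
  symm := ⟨by rintro i j ⟨h, d, h1, h2, h3⟩; exact ⟨h.symm, d, h1, h2, h3.symm⟩⟩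
  loopless := ⟨by rintro i ⟨h, -⟩; exact h rfl⟩
set_option linter.unusedSectionVars false

namespace Stmt12Aux

set_option linter.unusedSectionVars false

variable {V : Type*} [DecidableEq V] {blue : SimpleGraph V}

/-- A walk inside a finite set `A` from `u` to `w`, as a nonempty list. -/
def WalkIn (blue : SimpleGraph V) (A : Finset V) (u w : V) : Prop :=
  ∃ l : List V, l.Chain' blue.Adj ∧ l.head? = some u ∧ l.getLast? = some w ∧ ∀ x ∈ l, x ∈ A

theorem WalkIn.mono {A B : Finset V} (hAB : A ⊆ B) {u w : V} (h : WalkIn blue A u w) :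
    WalkIn blue B u w := by
  obtain ⟨l, h1, h2, h3, h4⟩ := h
  exact ⟨l, h1, h2, h3, fun x hx => hAB (h4 x hx)⟩

theorem walkIn_refl {A : Finset V} {v : V} (hv : v ∈ A) : WalkIn blue A v v :=
  ⟨[v], List.isChain_singleton v, rfl, rfl, by simpa using hv⟩

theorem WalkIn.right_mem {A : Finset V} {u w : V} (h : WalkIn blue A u w) : w ∈ A := by
  obtain ⟨l, _, _, h3, h4⟩ := h
  exact h4 w (List.mem_of_mem_getLast? h3)

theorem WalkIn.extend {A : Finset V} {u w z : V} (h : WalkIn blue A u w)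
    (hadj : blue.Adj w z) (hz : z ∈ A) : WalkIn blue A u z := by
  obtain ⟨l, h1, h2, h3, h4⟩ := h
  have hne : l ≠ [] := by rintro rfl; simp at h2
  refine ⟨l ++ [z], ?_, ?_, ?_, ?_⟩
  · refine List.IsChain.append h1 (List.isChain_singleton z) ?_
    intro x hx y hy
    simp only [List.head?_cons, Option.mem_def, Option.some_inj] at hy
    rw [h3] at hx
    simp only [Option.mem_def, Option.some_inj] at hx
    subst hx; subst hy; exact hadj
  · rw [List.head?_append_of_ne_nil _ hne]; exact h2
  · rw [List.getLast?_append_of_ne_nil _ (by simp : ([z] : List V) ≠ [])]; rfl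
  · intro x hx
    rcases List.mem_append.mp hx with h | h
    · exact h4 x h
    · simp only [List.mem_singleton] at h; subst h; exact hz

theorem WalkIn.symm {A : Finset V} {u w : V} (h : WalkIn blue A u w) : WalkIn blue A w u := by
  obtain ⟨l, h1, h2, h3, h4⟩ := h
  refine ⟨l.reverse, ?_, ?_, ?_, ?_⟩
  · refine List.isChain_reverse.mpr ?_
    exact h1.imp fun a b hab => hab.symm
  · rw [List.head?_reverse]; exact h3
  · rw [List.getLast?_reverse]; exact h2
  · intro x hx; exact h4 x (List.mem_reverse.mp hx)

theorem WalkIn.trans {A : Finset V} {u w z : V} (h1 : WalkIn blue A u w)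
    (h2 : WalkIn blue A w z) : WalkIn blue A u z := by
  obtain ⟨l1, f1, f2, f3, f4⟩ := h1
  obtain ⟨l2, g1, g2, g3, g4⟩ := h2
  cases l2 with
  | nil => simp at g2
  | cons w' r =>
    have hw : w' = w := by simpa using g2
    cases r with
    | nil =>
      have hwz : w = z := by rw [← hw]; simpa using g3
      rw [← hwz]
      exact ⟨l1, f1, f2, f3, f4⟩
    | cons b r' =>
      have hl1 : l1 ≠ [] := by rintro rfl; simp at f2
      refine ⟨l1 ++ b :: r', ?_, ?_, ?_, ?_⟩
      · refine List.IsChain.append f1 (List.isChain_cons_cons.mp g1).2 ?_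
        intro x hx y hy
        rw [f3] at hx
        simp only [Option.mem_def, Option.some_inj, List.head?_cons] at hx hy
        subst hx; subst hy
        exact hw ▸ (List.isChain_cons_cons.mp g1).1
      · rw [List.head?_append_of_ne_nil _ hl1]; exact f2
      · rw [List.getLast?_append_of_ne_nil _ (by simp : (b :: r' : List V) ≠ [])]
        rw [List.getLast?_cons_cons] at g3; exact g3
      · intro x hx
        rcases List.mem_append.mp hx with h | h
        · exact f4 x h
        · exact g4 x (by simp [h])

/-- every vertex on a walk from `u` is reachable from `u`. -/
theorem walkIn_of_mem_list {A : Finset V} {u x : V} {l : List V} (hc : l.Chain' blue.Adj)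
    (hh : l.head? = some u) (hA : ∀ y ∈ l, y ∈ A) (hx : x ∈ l) : WalkIn blue A u x := by
  obtain ⟨s, t, rfl⟩ := List.append_of_mem hx
  cases s with
  | nil =>
    have hxu : x = u := by simpa using hh
    rw [← hxu]
    exact walkIn_refl (hA _ (by simp))
  | cons a s' =>
    have hau : a = u := by simpa using hh
    refine ⟨a :: (s' ++ [x]), ?_, by simp [hau], ?_, ?_⟩
    · refine hc.prefix ?_
      refine ⟨t, ?_⟩
      simp
    · rw [show a :: (s' ++ [x]) = (a :: s') ++ [x] by simp,
        List.getLast?_append_of_ne_nil _ (by simp : ([x] : List V) ≠ [])]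
      rfl
    · intro y hy
      apply hA
      simp only [List.cons_append, List.mem_cons, List.mem_append, List.mem_singleton] at hy ⊢
      tauto


/-- The blue-connected component of `v` inside `A`. -/
noncomputable def comp (blue : SimpleGraph V) (A : Finset V) (v : V) : Finset V :=
  @Finset.filter _ (fun u => WalkIn blue A v u) (Classical.decPred _) A

theorem mem_comp {A : Finset V} {v u : V} :
    u ∈ comp blue A v ↔ u ∈ A ∧ WalkIn blue A v u := by
  simp [comp, Finset.mem_filter]

theorem comp_subset {A : Finset V} {v : V} : comp blue A v ⊆ A := by
  intro u hu; exact (mem_comp.mp hu).1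

theorem self_mem_comp {A : Finset V} {v : V} (hv : v ∈ A) : v ∈ comp blue A v :=
  mem_comp.mpr ⟨hv, walkIn_refl hv⟩

theorem comp_closed {A : Finset V} {v u w : V} (hu : u ∈ comp blue A v)
    (hadj : blue.Adj u w) (hw : w ∈ A) : w ∈ comp blue A v := by
  obtain ⟨_, hwalk⟩ := mem_comp.mp hu
  exact mem_comp.mpr ⟨hw, hwalk.extend hadj hw⟩

theorem walkIn_comp {A : Finset V} {v u : V} (hu : u ∈ comp blue A v) :
    WalkIn blue (comp blue A v) v u := by
  obtain ⟨huA, l, h1, h2, h3, h4⟩ := mem_comp.mp hu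
  exact ⟨l, h1, h2, h3, fun x hx =>
    mem_comp.mpr ⟨h4 x hx, walkIn_of_mem_list h1 h2 h4 hx⟩⟩

/-- From a walk from `v` to `u ≠ v`, extract the suffix after the last occurrence of `v` :
a walk from a neighbour of `v` to `u` avoiding `v`. -/
theorem suffix_walk : ∀ (N : ℕ) (l : List V) (v u : V) (A : Finset V),
    l.length ≤ N → l.Chain' blue.Adj → l.head? = some v → l.getLast? = some u → u ≠ v →
    (∀ x ∈ l, x ∈ A) →
    ∃ (w : V) (l' : List V), blue.Adj v w ∧ (w :: l').Chain' blue.Adj ∧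
      (w :: l').getLast? = some u ∧ ∀ x ∈ (w :: l'), x ∈ A ∧ x ≠ v := by
  intro N
  induction N with
  | zero =>
    intro l v u A hlen _ hh _ _ _
    cases l with
    | nil => simp at hh
    | cons a m => simp at hlen
  | succ N IH =>
    intro l v u A hlen hc hh hlast hne hA
    cases l with
    | nil => simp at hh
    | cons a m =>
      obtain rfl : v = a := (show a = v by simpa using hh).symm
      by_cases hv : v ∈ m
      · obtain ⟨s, t, rfl⟩ := List.append_of_mem hv
        have hsuffix : (v :: t) <:+ (v :: (s ++ v :: t)) := ⟨v :: s, by simp⟩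
        refine IH (v :: t) v u A ?_ (hc.suffix hsuffix) rfl ?_ hne ?_
        · have := hlen
          simp only [List.length_cons, List.length_append] at this ⊢
          omega
        · rw [show v :: (s ++ v :: t) = (v :: s) ++ (v :: t) by simp] at hlast
          rw [← List.getLast?_append_of_ne_nil (v :: s) (by simp : (v :: t : List V) ≠ [])]
          exact hlast
        · intro x hx
          apply hA
          simp only [List.mem_cons, List.mem_append] at hx ⊢
          tauto
      · cases m with
        | nil =>
          exact absurd (show v = u by simpa using hlast).symm hne
        | cons w r =>
          refine ⟨w, r, (List.isChain_cons_cons.mp hc).1, (List.isChain_cons_cons.mp hc).2, ?_, ?_⟩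
          · rw [List.getLast?_cons_cons] at hlast; exact hlast
          · intro x hx
            refine ⟨hA x (List.mem_cons_of_mem _ hx), ?_⟩
            rintro rfl
            exact hv hx


/-- Carve exactly `t` vertices out of a blue-connected region `K` (connected from `v`),
discarding a chain `C` of at most `d` vertices containing `v`, such that no blue edge
joins the carved set `T` to `K \ (T ∪ C)`. -/
theorem carveConn : ∀ (N : ℕ) (K : Finset V) (v : V) (d t : ℕ),
    K.card ≤ N → v ∈ K → (∀ u ∈ K, WalkIn blue K v u) →
    (¬ ∃ l : List V, l.Nodup ∧ l.Chain' blue.Adj ∧ l.length = d + 1 ∧ l.head? = some v ∧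
        ∀ x ∈ l, x ∈ K) →
    t + 1 ≤ K.card →
    ∃ T C : Finset V, T ⊆ K ∧ C ⊆ K ∧ v ∈ C ∧ T.card = t ∧ C.card ≤ d ∧
      ∀ u ∈ T, ∀ w ∈ K, w ∉ T → w ∉ C → ¬ blue.Adj u w := by
  intro N
  induction N with
  | zero =>
    intro K v d t hN hv _ _ _
    exact absurd (Finset.card_pos.mpr ⟨v, hv⟩) (by omega)
  | succ N IH =>
    intro K v d t hN hv hINV hpath ht
    rcases d with _ | d'
    · exact absurd ⟨[v], List.nodup_singleton v, List.isChain_singleton v, rfl, rfl,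
        by simpa using hv⟩ hpath
    rcases t with _ | t''
    · exact ⟨∅, {v}, Finset.empty_subset K, by simpa using hv, Finset.mem_singleton_self v,
        Finset.card_empty, by simpa using Nat.succ_le_succ (Nat.zero_le d'), by simp⟩
    have herase : (K.erase v).Nonempty := by
      rw [← Finset.card_pos, Finset.card_erase_of_mem hv]; omega
    obtain ⟨u₀, hu₀⟩ := herase
    obtain ⟨l₀, c₀1, c₀2, c₀3, c₀4⟩ := hINV u₀ (Finset.mem_of_mem_erase hu₀)
    obtain ⟨w₁, l₁, hadj₁, hch₁, hlast₁, hmem₁⟩ :=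
      suffix_walk l₀.length l₀ v u₀ K le_rfl c₀1 c₀2 c₀3 (Finset.ne_of_mem_erase hu₀) c₀4
    have hw₁K : w₁ ∈ K.erase v := by
      have := hmem₁ w₁ (by simp)
      exact Finset.mem_erase.mpr ⟨this.2, this.1⟩
    set K₁ := comp blue (K.erase v) w₁ with hK₁def
    have hK₁sub : K₁ ⊆ K.erase v := comp_subset
    have hw₁K₁ : w₁ ∈ K₁ := self_mem_comp hw₁K
    have hvK₁ : v ∉ K₁ := fun h => (Finset.mem_erase.mp (hK₁sub h)).1 rfl
    by_cases hsize : K₁.card ≤ t'' + 1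
    · -- take the whole component K₁ and recurse on K \ K₁
      set K' := K \ K₁ with hK'def
      have hK₁K : K₁ ⊆ K := hK₁sub.trans (Finset.erase_subset _ _)
      have hvK' : v ∈ K' := Finset.mem_sdiff.mpr ⟨hv, hvK₁⟩
      have hcard' : K'.card = K.card - K₁.card := Finset.card_sdiff_of_subset hK₁K
      have hK₁pos : 0 < K₁.card := Finset.card_pos.mpr ⟨w₁, hw₁K₁⟩
      have hINV' : ∀ u ∈ K', WalkIn blue K' v u := by
        intro u hu
        rcases eq_or_ne u v with rfl | huv
        · exact walkIn_refl hvK'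
        obtain ⟨l₂, c1, c2, c3, c4⟩ := hINV u (Finset.mem_sdiff.mp hu).1
        obtain ⟨w', l'', hadj', hch', hlast', hmem'⟩ :=
          suffix_walk l₂.length l₂ v u K le_rfl c1 c2 c3 huv c4
        have hmemE : ∀ y ∈ (w' :: l''), y ∈ K.erase v := by
          intro y hy
          exact Finset.mem_erase.mpr ⟨(hmem' y hy).2, (hmem' y hy).1⟩
        have havoid : ∀ x ∈ (w' :: l''), x ∉ K₁ := by
          intro x hx hxK₁
          have hx' : WalkIn blue (K.erase v) w' x := walkIn_of_mem_list hch' rfl hmemE hx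
          have hu' : WalkIn blue (K.erase v) w' u :=
            walkIn_of_mem_list hch' rfl hmemE (List.mem_of_mem_getLast? hlast')
          have hwu : WalkIn blue (K.erase v) w₁ u :=
            ((mem_comp.mp hxK₁).2.trans hx'.symm).trans hu'
          have huK₁ : u ∈ K₁ := mem_comp.mpr ⟨hwu.right_mem, hwu⟩
          exact (Finset.mem_sdiff.mp hu).2 huK₁
        refine ⟨v :: w' :: l'', ?_, rfl, ?_, ?_⟩
        · exact List.isChain_cons_cons.mpr ⟨hadj', hch'⟩
        · rw [List.getLast?_cons_cons]; exact hlast'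
        · intro x hx
          rcases List.mem_cons.mp hx with rfl | hx'
          · exact hvK'
          · exact Finset.mem_sdiff.mpr ⟨(hmem' x hx').1, havoid x hx'⟩
      have hpath' : ¬ ∃ l : List V, l.Nodup ∧ l.Chain' blue.Adj ∧ l.length = (d' + 1) + 1 ∧
          l.head? = some v ∧ ∀ x ∈ l, x ∈ K' := by
        rintro ⟨l, a1, a2, a3, a4, a5⟩
        exact hpath ⟨l, a1, a2, a3, a4, fun x hx => (Finset.mem_sdiff.mp (a5 x hx)).1⟩
      obtain ⟨T', C', hT'sub, hC'sub, hvC', hT'card, hC'card, hsep'⟩ :=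
        IH K' v (d' + 1) (t'' + 1 - K₁.card) (by omega) hvK' hINV' hpath' (by omega)
      refine ⟨K₁ ∪ T', C', Finset.union_subset hK₁K (hT'sub.trans Finset.sdiff_subset),
        hC'sub.trans Finset.sdiff_subset, hvC', ?_, hC'card, ?_⟩
      · rw [Finset.card_union_of_disjoint (Finset.disjoint_left.mpr fun x hx hx' =>
          (Finset.mem_sdiff.mp (hT'sub hx')).2 hx)]
        omega
      · intro u hu w hw hwT hwC
        have hwK₁ : w ∉ K₁ := fun h => hwT (Finset.mem_union_left _ h)
        rcases Finset.mem_union.mp hu with huK₁ | huT'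
        · intro hadj
          have hwv : w ≠ v := by rintro rfl; exact hwC hvC'
          exact hwK₁ (comp_closed huK₁ hadj (Finset.mem_erase.mpr ⟨hwv, hw⟩))
        · exact hsep' u huT' w (Finset.mem_sdiff.mpr ⟨hw, hwK₁⟩)
            (fun h => hwT (Finset.mem_union_right _ h)) hwC
    · -- recurse inside K₁, rooted at w₁, with depth budget d'
      push_neg at hsize
      have hK₁cardle : K₁.card ≤ N := by
        have h1 : K₁.card ≤ (K.erase v).card := Finset.card_le_card hK₁sub
        rw [Finset.card_erase_of_mem hv] at h1
        omega
      have hpath₁ : ¬ ∃ l : List V, l.Nodup ∧ l.Chain' blue.Adj ∧ l.length = d' + 1 ∧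
          l.head? = some w₁ ∧ ∀ x ∈ l, x ∈ K₁ := by
        rintro ⟨l, a1, a2, a3, a4, a5⟩
        refine hpath ⟨v :: l, ?_, ?_, by simp [a3], rfl, ?_⟩
        · exact List.nodup_cons.mpr ⟨fun hvl => hvK₁ (a5 v hvl), a1⟩
        · refine List.isChain_cons.mpr ⟨?_, a2⟩
          intro y hy
          rw [a4] at hy
          obtain rfl : y = w₁ := (show w₁ = y by simpa using hy).symm
          exact hadj₁
        · intro x hx
          rcases List.mem_cons.mp hx with rfl | hx'
          · exact hv
          · exact (Finset.erase_subset _ _) (hK₁sub (a5 x hx'))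
      obtain ⟨T, C₁, hTsub, hC₁sub, hw₁C₁, hTcard, hC₁card, hsep₁⟩ :=
        IH K₁ w₁ d' (t'' + 1) hK₁cardle hw₁K₁ (fun u hu => walkIn_comp hu) hpath₁ hsize
      have hK₁K : K₁ ⊆ K := hK₁sub.trans (Finset.erase_subset _ _)
      refine ⟨T, insert v C₁, hTsub.trans hK₁K, ?_,
        Finset.mem_insert_self v C₁, hTcard, ?_, ?_⟩
      · exact Finset.insert_subset hv (hC₁sub.trans hK₁K)
      · calc (insert v C₁).card ≤ C₁.card + 1 := Finset.card_insert_le v C₁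
          _ ≤ d' + 1 := by omega
      · intro u hu w hw hwT hwC
        have hwv : w ≠ v := fun h => hwC (h ▸ Finset.mem_insert_self v C₁)
        have hwC₁ : w ∉ C₁ := fun h => hwC (Finset.mem_insert_of_mem h)
        by_cases hwK₁ : w ∈ K₁
        · exact hsep₁ u hu w hwK₁ hwT hwC₁
        · intro hadj
          exact hwK₁ (comp_closed (hTsub hu) hadj (Finset.mem_erase.mpr ⟨hwv, hw⟩))


/-- Carve `t` vertices out of any set `S`, assuming `blue` has no path on `n` vertices. -/
theorem carve {n : ℕ}
    (HNP : ¬ ∃ l : List V, l.Nodup ∧ l.Chain' blue.Adj ∧ l.length = n) (hn : 1 ≤ n) :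
    ∀ (N : ℕ) (S : Finset V) (t : ℕ), S.card ≤ N → t ≤ S.card →
    ∃ T C : Finset V, T ⊆ S ∧ C ⊆ S ∧ T.card = t ∧ C.card ≤ n - 1 ∧
      ∀ u ∈ T, ∀ w ∈ S, w ∉ T → w ∉ C → ¬ blue.Adj u w := by
  intro N
  induction N with
  | zero =>
    intro S t hN ht
    refine ⟨∅, ∅, Finset.empty_subset S, Finset.empty_subset S, ?_, by simp, by simp⟩
    simp; omega
  | succ N IH =>
    intro S t hN ht
    rcases t with _ | t'
    · exact ⟨∅, ∅, Finset.empty_subset S, Finset.empty_subset S, Finset.card_empty, by simp,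
        by simp⟩
    have hSne : S.Nonempty := Finset.card_pos.mp (by omega)
    obtain ⟨v, hv⟩ := hSne
    set K := comp blue S v with hKdef
    have hKsub : K ⊆ S := comp_subset
    have hvK : v ∈ K := self_mem_comp hv
    have hKpos : 0 < K.card := Finset.card_pos.mpr ⟨v, hvK⟩
    by_cases hsize : K.card ≤ t' + 1
    · -- take whole component, recurse on the rest
      have hcard' : (S \ K).card = S.card - K.card := Finset.card_sdiff_of_subset hKsub
      obtain ⟨T', C', hT'sub, hC'sub, hT'card, hC'card, hsep'⟩ :=
        IH (S \ K) (t' + 1 - K.card) (by omega) (by omega)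
      refine ⟨K ∪ T', C', Finset.union_subset hKsub (hT'sub.trans Finset.sdiff_subset),
        hC'sub.trans Finset.sdiff_subset, ?_, hC'card, ?_⟩
      · rw [Finset.card_union_of_disjoint (Finset.disjoint_left.mpr fun x hx hx' =>
          (Finset.mem_sdiff.mp (hT'sub hx')).2 hx)]
        omega
      · intro u hu w hw hwT hwC
        have hwK : w ∉ K := fun h => hwT (Finset.mem_union_left _ h)
        rcases Finset.mem_union.mp hu with huK | huT'
        · exact fun hadj => hwK (comp_closed huK hadj hw)
        · exact hsep' u huT' w (Finset.mem_sdiff.mpr ⟨hw, hwK⟩)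
            (fun h => hwT (Finset.mem_union_right _ h)) hwC
    · -- carve within the component
      push_neg at hsize
      have hpathK : ¬ ∃ l : List V, l.Nodup ∧ l.Chain' blue.Adj ∧ l.length = (n - 1) + 1 ∧
          l.head? = some v ∧ ∀ x ∈ l, x ∈ K := by
        rintro ⟨l, a1, a2, a3, _, _⟩
        exact HNP ⟨l, a1, a2, by omega⟩
      obtain ⟨T, C, hTsub, hCsub, _, hTcard, hCcard, hsep⟩ :=
        carveConn K.card K v (n - 1) (t' + 1) le_rfl hvK
          (fun u hu => walkIn_comp hu) hpathK hsize
      refine ⟨T, C, hTsub.trans hKsub, hCsub.trans hKsub, hTcard, hCcard, ?_⟩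
      intro u hu w hw hwT hwC
      by_cases hwK : w ∈ K
      · exact hsep u hu w hwK hwT hwC
      · exact fun hadj => hwK (comp_closed (hTsub hu) hadj hw)

/-- Pack `j` pairwise blue-disconnected bins of exactly `q` vertices each. -/
theorem bins {n : ℕ}
    (HNP : ¬ ∃ l : List V, l.Nodup ∧ l.Chain' blue.Adj ∧ l.length = n) (hn : 1 ≤ n)
    (q : ℕ) :
    ∀ (j : ℕ) (S : Finset V), q * j + (n - 1) * (j - 1) ≤ S.card →
    ∃ A : Fin j → Finset V, (∀ i, A i ⊆ S) ∧ (∀ i, (A i).card = q) ∧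
      (∀ i i', i ≠ i' → Disjoint (A i) (A i')) ∧
      (∀ i i', i ≠ i' → ∀ u ∈ A i, ∀ w ∈ A i', ¬ blue.Adj u w) := by
  intro j
  induction j with
  | zero =>
    intro S _
    exact ⟨Fin.elim0, fun i => i.elim0, fun i => i.elim0, fun i => i.elim0, fun i => i.elim0⟩
  | succ j IH =>
    intro S hS
    rcases Nat.eq_zero_or_pos j with rfl | hj
    · -- single bin : no boundary needed
      have hq : q ≤ S.card := by simpa using hS
      obtain ⟨T, hTS, hTcard⟩ := Finset.exists_subset_card_eq hq
      refine ⟨fun _ => T, fun _ => hTS, fun _ => hTcard, ?_, ?_⟩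
      · intro i i' hii'
        have h1 := i.isLt; have h2 := i'.isLt
        exact absurd (Fin.ext (by omega)) hii'
      · intro i i' hii'
        have h1 := i.isLt; have h2 := i'.isLt
        exact absurd (Fin.ext (by omega)) hii'
    · have hq : q ≤ S.card := by
        refine le_trans ?_ hS
        calc q = q * 1 := (Nat.mul_one q).symm
          _ ≤ q * (j + 1) := Nat.mul_le_mul_left q (by omega)
          _ ≤ _ := Nat.le_add_right _ _
      obtain ⟨T, C, hTsub, hCsub, hTcard, hCcard, hsep⟩ :=
        carve HNP hn S.card S q le_rfl hq
      set S' := S \ (T ∪ C) with hS'def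
      have hS'card : q * j + (n - 1) * (j - 1) ≤ S'.card := by
        have h1 : S'.card = S.card - (T ∪ C).card :=
          Finset.card_sdiff_of_subset (Finset.union_subset hTsub hCsub)
        have h2 : (T ∪ C).card ≤ q + (n - 1) := by
          calc (T ∪ C).card ≤ T.card + C.card := Finset.card_union_le T C
            _ ≤ q + (n - 1) := by omega
        -- arithmetic : q*(j+1) + (n-1)*j ≤ S.card
        have h3 : q * (j + 1) + (n - 1) * j ≤ S.card := by simpa using hS
        have h4 : q * (j + 1) = q * j + q := by ring
        have h5 : (n - 1) * j = (n - 1) * (j - 1) + (n - 1) := by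
          obtain ⟨m, rfl⟩ := Nat.exists_eq_add_of_le hj
          simp [Nat.add_sub_cancel]
          ring
        omega
      obtain ⟨A', hA'sub, hA'card, hA'disj, hA'cross⟩ := IH S' hS'card
      have hS'S : S' ⊆ S := Finset.sdiff_subset
      have hS'T : ∀ x ∈ S', x ∉ T ∧ x ∉ C := by
        intro x hx
        have := (Finset.mem_sdiff.mp hx).2
        simp only [Finset.mem_union] at this
        exact ⟨fun h => this (Or.inl h), fun h => this (Or.inr h)⟩
      refine ⟨Fin.cons T A', ?_, ?_, ?_, ?_⟩
      · intro i
        refine Fin.cases ?_ ?_ i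
        · simpa using hTsub
        · intro i'
          simpa using (hA'sub i').trans hS'S
      · intro i
        refine Fin.cases ?_ ?_ i
        · simpa using hTcard
        · intro i'
          simpa using hA'card i'
      · intro i i'
        refine Fin.cases ?_ ?_ i
        · refine Fin.cases ?_ ?_ i'
          · intro h; exact absurd rfl h
          · intro b _
            simp only [Fin.cons_zero, Fin.cons_succ]
            exact Finset.disjoint_left.mpr fun x hx hx' => (hS'T x (hA'sub b hx')).1 hx
        · intro a
          refine Fin.cases ?_ ?_ i'
          · intro _
            simp only [Fin.cons_zero, Fin.cons_succ]
            exact Finset.disjoint_right.mpr fun x hx hx' => (hS'T x (hA'sub a hx')).1 hx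
          · intro b h
            simp only [Fin.cons_succ]
            exact hA'disj a b (by rintro rfl; exact h rfl)
      · intro i i'
        refine Fin.cases ?_ ?_ i
        · refine Fin.cases ?_ ?_ i'
          · intro h; exact absurd rfl h
          · intro b _
            simp only [Fin.cons_zero, Fin.cons_succ]
            intro u hu w hw
            have hwS' := hA'sub b hw
            exact hsep u hu w (hS'S hwS') (hS'T w hwS').1 (hS'T w hwS').2
        · intro a
          refine Fin.cases ?_ ?_ i'
          · intro _
            simp only [Fin.cons_zero, Fin.cons_succ]
            intro u hu w hw hadj
            have huS' := hA'sub a hu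
            exact hsep w hw u (hS'S huS') (hS'T u huS').1 (hS'T u huS').2 hadj.symm
          · intro b h
            simp only [Fin.cons_succ]
            exact hA'cross a b (by rintro rfl; exact h rfl)

end Stmt12Aux

/-- Claim 3.3: given a red/blue colouring of `E(F^k)` (blue edges the graph
`blue ≤ F^k`, all other pairs red) whose extension to the complete graph yields a blue `P_n`
or a large balanced red complete `(k+1)`-partite subgraph, and given the cyclic-path property
of `F`, there is a blue `P_n` or a red `P_n^k`. -/
theorem stmt_12 {V : Type*} [Fintype V] (k n a : ℕ) (hk : 1 ≤ k) (ha : 6 * k ≤ a)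
    (F : SimpleGraph V) (blue : SimpleGraph V) (hble : blue ≤ gpow F k)
    (hcard : (a * n : ℝ) / 2 ≤ Fintype.card V)
    (hram : (∃ x : Fin n → V, Function.Injective x ∧
        ∀ i : ℕ, ∀ h : i + 1 < n, blue.Adj (x ⟨i, by omega⟩) (x ⟨i + 1, h⟩)) ∨
      (∃ B : Fin (k + 1) → Finset V,
        (∀ i j, i ≠ j → Disjoint (B i) (B j)) ∧
        (∀ i j, (B i).card ≤ (B j).card + 1) ∧
        ((Fintype.card V : ℤ) - k * n ≤ ∑ i, ((B i).card : ℤ)) ∧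
        (∀ i j, i ≠ j → ∀ u ∈ B i, ∀ v ∈ B j, ¬ blue.Adj u v)))
    (hpathprop : ∀ A : Fin (k + 1) → Finset V, (∀ i j, i ≠ j → Disjoint (A i) (A j)) →
      (∀ i, (1 / (3 * ((k : ℝ) + 1))) * a * n ≤ ((A i).card : ℝ)) →
      ∃ x : Fin n → V, Function.Injective x ∧
        (∀ i : ℕ, ∀ h : i + 1 < n, F.Adj (x ⟨i, by omega⟩) (x ⟨i + 1, h⟩)) ∧
        (∀ i : Fin n, x i ∈ A ⟨(i : ℕ) % (k + 1), Nat.mod_lt _ (by omega)⟩)) :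
    (∃ x : Fin n → V, Function.Injective x ∧
      ∀ i : ℕ, ∀ h : i + 1 < n, blue.Adj (x ⟨i, by omega⟩) (x ⟨i + 1, h⟩)) ∨
    (∃ x : Fin n → V, Function.Injective x ∧
      ∀ i j : Fin n, (pathPow n k).Adj i j →
        (gpow F k).Adj (x i) (x j) ∧ ¬ blue.Adj (x i) (x j)) := by
  classical
  rcases Nat.eq_zero_or_pos n with rfl | hn
  · exact Or.inl ⟨Fin.elim0, by intro a b h; exact a.elim0, fun i h => absurd h (by omega)⟩
  by_cases hblue : ∃ x : Fin n → V, Function.Injective x ∧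
      ∀ i : ℕ, ∀ h : i + 1 < n, blue.Adj (x ⟨i, by omega⟩) (x ⟨i + 1, h⟩)
  · exact Or.inl hblue
  -- blue has no path on n vertices
  have HNP : ¬ ∃ l : List V, l.Nodup ∧ l.Chain' blue.Adj ∧ l.length = n := by
    rintro ⟨l, hnd, hch, hlen⟩
    apply hblue
    refine ⟨fun i => l.get (Fin.cast hlen.symm i), ?_, ?_⟩
    · exact (List.nodup_iff_injective_get.mp hnd).comp (Fin.cast_injective _)
    · intro i hi
      exact List.isChain_iff_getElem.mp hch i (by omega)
  -- the bin size q = ⌈a n / (3(k+1))⌉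
  obtain ⟨q, r, hqr, hr⟩ : ∃ q r, 3 * ((k + 1) * q) + r = a * n + 3 * k + 2 ∧ r < 3 * k + 3 := by
    refine ⟨(a * n + 3 * k + 2) / (3 * k + 3), (a * n + 3 * k + 2) % (3 * k + 3), ?_,
      Nat.mod_lt _ (by omega)⟩
    rw [show 3 * ((k + 1) * ((a * n + 3 * k + 2) / (3 * k + 3)))
        = (3 * k + 3) * ((a * n + 3 * k + 2) / (3 * k + 3)) by ring]
    exact Nat.div_add_mod _ _
  have h6 : 6 * (k * n) ≤ a * n := by
    calc 6 * (k * n) = (6 * k) * n := by ring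
      _ ≤ a * n := Nat.mul_le_mul_right n ha
  have hV2 : a * n ≤ Fintype.card V * 2 := by
    have h := hcard
    rw [div_le_iff₀ (by norm_num : (0:ℝ) < 2)] at h
    exact_mod_cast h
  have hkn : k ≤ k * n := by
    calc k = k * 1 := (Nat.mul_one k).symm
      _ ≤ k * n := Nat.mul_le_mul_left k hn
  have hsub : (n - 1) * k = k * n - k := by
    cases n with
    | zero => simp
    | succ m => rw [Nat.succ_sub_one, Nat.mul_succ, Nat.add_sub_cancel, Nat.mul_comm]
  have hQn : a * n ≤ 3 * ((k + 1) * q) := by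
    generalize hA1 : a * n = N at hqr ⊢
    generalize hA3 : (k + 1) * q = Q2 at hqr ⊢
    omega
  have main_ineq : (k + 1) * q + (n - 1) * k ≤ Fintype.card V := by
    rw [hsub]
    generalize hA1 : a * n = N at hqr h6 hV2
    generalize hA2 : k * n = P at h6 hkn ⊢
    generalize hA3 : (k + 1) * q = Q2 at hqr
    omega
  letI : DecidableEq V := Classical.decEq V
  obtain ⟨A, hAsub, hAcard, hAdisj, hAcross⟩ :=
    Stmt12Aux.bins (blue := blue) HNP hn q (k + 1) Finset.univ (by
      rw [Finset.card_univ]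
      calc q * (k + 1) + (n - 1) * ((k + 1) - 1) = (k + 1) * q + (n - 1) * k := by
            rw [Nat.add_sub_cancel, Nat.mul_comm q (k + 1)]
        _ ≤ _ := main_ineq)
  obtain ⟨x, hxinj, hxF, hxmem⟩ := hpathprop A hAdisj (fun i => by
    rw [hAcard i]
    have h3 : (0:ℝ) < 3 * ((k:ℝ) + 1) := by positivity
    rw [show (1 / (3 * ((k:ℝ) + 1))) * a * n = ((a:ℝ) * n) / (3 * ((k:ℝ) + 1)) by ring,
      div_le_iff₀ h3]
    have hcast := (Nat.cast_le (α := ℝ)).mpr hQn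
    push_cast at hcast
    nlinarith [hcast])
  -- build walks along the path
  have key : ∀ (d : ℕ) (i0 : ℕ) (hi0 : i0 < n) (h : i0 + d < n),
      ∃ p : F.Walk (x ⟨i0, hi0⟩) (x ⟨i0 + d, h⟩), p.length = d := by
    intro d
    induction d with
    | zero => intro i0 hi0 h; exact ⟨SimpleGraph.Walk.nil, rfl⟩
    | succ d IH =>
      intro i0 hi0 h
      obtain ⟨p, hp⟩ := IH i0 hi0 (by omega)
      refine ⟨p.concat (hxF (i0 + d) (by omega)), ?_⟩
      rw [SimpleGraph.Walk.length_concat, hp]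
  have build : ∀ (i j : Fin n), i.val < j.val → j.val - i.val ≤ k →
      (gpow F k).Adj (x i) (x j) := by
    intro i j hlt hle
    obtain ⟨p, hp⟩ := key (j.val - i.val) i.val i.isLt (by omega)
    have hne' : i ≠ j := Fin.ne_of_val_ne (by omega)
    refine ⟨fun h => hne' (hxinj h), ?_⟩
    have e1 : (⟨i.val, i.isLt⟩ : Fin n) = i := rfl
    have e2 : (⟨i.val + (j.val - i.val), by omega⟩ : Fin n) = j :=
      Fin.ext (show i.val + (j.val - i.val) = j.val by omega)
    exact ⟨p.copy (congrArg x e1) (congrArg x e2),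
      by rw [SimpleGraph.Walk.length_copy, hp]; omega⟩
  refine Or.inr ⟨x, hxinj, ?_⟩
  intro i j hadj
  obtain ⟨hne, hij, hji⟩ := hadj
  have hvalne : i.val ≠ j.val := fun h => hne (Fin.ext h)
  have hgp : (gpow F k).Adj (x i) (x j) := by
    rcases Nat.lt_or_ge i.val j.val with hlt | hge
    · exact build i j hlt hji
    · exact (build j i (by omega) hij).symm
  have hmodne : i.val % (k + 1) ≠ j.val % (k + 1) := by
    have hgen : ∀ (p q' : ℕ), p < q' → q' - p ≤ k → p % (k + 1) = q' % (k + 1) → False := by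
      intro p q' hpq hle hm
      have hd : (k + 1) ∣ q' - p := (Nat.modEq_iff_dvd' (le_of_lt hpq)).mp hm
      have := Nat.le_of_dvd (by omega) hd
      omega
    intro hm
    rcases Nat.lt_or_ge i.val j.val with hlt | hge
    · exact hgen _ _ hlt hji hm
    · exact hgen _ _ (by omega) hij hm.symm
  refine ⟨hgp, ?_⟩
  intro hb
  exact hAcross ⟨i.val % (k + 1), Nat.mod_lt _ (by omega)⟩ ⟨j.val % (k + 1), Nat.mod_lt _ (by omega)⟩
    (fun h => hmodne (by simpa using congrArg Fin.val h)) _ (hxmem i) _ (hxmem j) hb
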